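/- Let p ≥ 2 be an integer, φ ∈ ℝ, c ∈ ℝ, and consider the time series s_n = cos(2πn/p + φ) and the constant series r_n = c, both of length N. Let L be the window length and K = N − L + 1, and let S and R be the L×K trajectory matrices of (s_n) and (r_n) respectively. If p divides both L and K, then the trajectory matrices are bi-orthogonal: S R^T = 0 and S^T R = 0 (so that the signal and the residual are exactly separable). -/

import Mathlib

open Matrix Complex

lemma sum_cos_period (p : ℕ) (hp : 2 ≤ p) (θ : ℝ) (K : ℕ) (hpK : p ∣ K) :
    ∑ j ∈ Finset.range K, Real.cos (θ + 2 * Real.pi * j / p) = 0 := by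
  obtain ⟨m, rfl⟩ := hpK
  have hp0 : (p : ℂ) ≠ 0 := by
    have : 0 < p := by omega
    exact_mod_cast this.ne'
  set z : ℂ := Complex.exp (2 * Real.pi * Complex.I / p) with hz
  have hz1 : z ≠ 1 := by
    intro h
    rw [hz, Complex.exp_eq_one_iff] at h
    obtain ⟨n, hn⟩ := h
    have hn' : (n : ℂ) * p = 1 := by
      have h2 : (2 : ℂ) * Real.pi * Complex.I ≠ 0 := by
        simp [Real.pi_ne_zero, Complex.I_ne_zero]
      field_simp at hn
      have h3 : (2 * (Real.pi:ℂ) * Complex.I) * ((n:ℂ) * p - 1) = 0 := by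
        linear_combination -(2 * (Real.pi:ℂ) * Complex.I) * hn
      rcases mul_eq_zero.mp h3 with h | h
      · exact absurd h h2
      · linear_combination h
    have : ((n * p : ℤ) : ℂ) = 1 := by push_cast; linear_combination hn'
    have h3 : (n * p : ℤ) = 1 := by exact_mod_cast this
    have : (p : ℤ) ∣ 1 := ⟨n, by linarith [h3]⟩
    have := Int.le_of_dvd one_pos this
    omega
  have hzp : z ^ p = 1 := by
    rw [hz, ← Complex.exp_nat_mul]
    have : (p : ℂ) * (2 * Real.pi * Complex.I / p) = 2 * Real.pi * Complex.I := by
      field_simp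
    rw [this, Complex.exp_two_pi_mul_I]
  have key : ∀ j : ℕ, Real.cos (θ + 2 * Real.pi * j / p)
      = (Complex.exp (θ * Complex.I) * z ^ j).re := by
    intro j
    rw [hz, ← Complex.exp_nat_mul, ← Complex.exp_add]
    have : (θ : ℂ) * Complex.I + (j : ℂ) * (2 * Real.pi * Complex.I / p)
        = ((θ + 2 * Real.pi * j / p : ℝ) : ℂ) * Complex.I := by
      push_cast; field_simp
    rw [this, Complex.exp_ofReal_mul_I_re]
  simp_rw [key]
  rw [← Complex.re_sum, ← Finset.mul_sum, geom_sum_eq hz1, pow_mul, hzp, one_pow]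
  simp

open Matrix

/-- Let `s n = cos (2πn/p + φ)` be a sinusoid with integer period
`p ≥ 2` and let `r n = c` be a constant series, both of length `N`, with window
length `L` and `K = N - L + 1`. If `p` divides both `L` and `K`, then the `L×K`
trajectory matrices `S` and `R` of the two series are bi-orthogonal:
`S Rᵀ = 0` and `Sᵀ R = 0` (exact separability of signal and residual). -/
theorem sinusoid_constant_biorthogonal
    (p : ℕ) (hp : 2 ≤ p) (φ c : ℝ)
    (N L : ℕ) (hL1 : 1 ≤ L) (hLN : L < N)
    (K : ℕ) (hK : K = N - L + 1)
    (S R : Matrix (Fin L) (Fin K) ℝ)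
    (hS : ∀ (i : Fin L) (j : Fin K),
      S i j = Real.cos (2 * Real.pi * ((((i : ℕ) + (j : ℕ) : ℕ) : ℝ)) / (p : ℝ) + φ))
    (hR : ∀ (i : Fin L) (j : Fin K), R i j = c)
    (hpL : p ∣ L) (hpK : p ∣ K) :
    S * Rᵀ = 0 ∧ Sᵀ * R = 0 := by
  have hsum1 : ∀ i : Fin L,
      ∑ j : Fin K, Real.cos (2 * Real.pi * ((((i:ℕ) + (j:ℕ) : ℕ)):ℝ) / p + φ) = 0 := by
    intro i
    rw [Fin.sum_univ_eq_sum_range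
      (fun j => Real.cos (2 * Real.pi * ((((i:ℕ) + j : ℕ)):ℝ) / p + φ))]
    rw [← sum_cos_period p hp (2 * Real.pi * i / p + φ) K hpK]
    refine Finset.sum_congr rfl fun j _ => ?_
    congr 1
    push_cast
    ring
  have hsum2 : ∀ j : Fin K,
      ∑ i : Fin L, Real.cos (2 * Real.pi * ((((i:ℕ) + (j:ℕ) : ℕ)):ℝ) / p + φ) = 0 := by
    intro j
    rw [Fin.sum_univ_eq_sum_range
      (fun i => Real.cos (2 * Real.pi * (((i + (j:ℕ) : ℕ)):ℝ) / p + φ))]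
    rw [← sum_cos_period p hp (2 * Real.pi * j / p + φ) L hpL]
    refine Finset.sum_congr rfl fun i _ => ?_
    congr 1
    push_cast
    ring
  constructor
  · ext i k
    simp only [Matrix.mul_apply, Matrix.transpose_apply, hS, hR, Matrix.zero_apply]
    rw [← Finset.sum_mul, hsum1 i, zero_mul]
  · ext j k
    simp only [Matrix.mul_apply, Matrix.transpose_apply, hS, hR, Matrix.zero_apply]
    rw [← Finset.sum_mul, hsum2 j, zero_mul]
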